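/- Let X be a Hausdorff (T2) topological space and κ an infinite cardinal. Assume X is almost discretely Lindelöf and the tightness of X is at most κ. Then X contains no free sequence of length κ⁺ (the cardinal successor of κ); that is, there is no injective family (x_α)_{α<κ⁺} of points of X such that for every β < κ⁺ the closure of {x_α : α < β} and the closure of {x_α : β ≤ α < κ⁺} are disjoint. -/

import Mathlib

open Cardinal Set Filter Topology

/-- A topological space is *almost discretely Lindelöf* if every subset that is
discrete in the subspace topology is contained in a Lindelöf subspace. -/
def AlmostDiscretelyLindelof (X : Type*) [TopologicalSpace X] : Prop :=
  ∀ D : Set X, DiscreteTopology D → ∃ Y : Set X, D ⊆ Y ∧ IsLindelof Y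

/-- `IsFreeSequence x` says that the injective transfinite family `x`, indexed by the
ordinals below `η`, is a free sequence: for every `β < η` the closure of the initial
part `{x_α : α < β}` is disjoint from the closure of the final part `{x_α : β ≤ α}`. -/
def IsFreeSequence {X : Type u} [TopologicalSpace X] {η : Ordinal.{u}}
    (x : Set.Iio η → X) : Prop :=
  Function.Injective x ∧
    ∀ β : Set.Iio η,
      Disjoint (closure (x '' {α | (α : Ordinal) < (β : Ordinal)}))
        (closure (x '' {α | (β : Ordinal) ≤ (α : Ordinal)}))

theorem no_free_sequence_of_length_succ_of_almostDiscretelyLindelof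
    {X : Type u} [TopologicalSpace X] [T2Space X] (κ : Cardinal.{u})
    (hκ : ℵ₀ ≤ κ)
    (hADL : AlmostDiscretelyLindelof X)
    (htight : ∀ A : Set X, ∀ x ∈ closure A, ∃ B ⊆ A, #B ≤ κ ∧ x ∈ closure B) :
    ¬ ∃ x : Set.Iio (Order.succ κ).ord → X, IsFreeSequence x := by
  set η : Ordinal.{u} := (Order.succ κ).ord with hη
  rintro ⟨x, hinj, hfree⟩
  have hreg : (Order.succ κ).IsRegular := Cardinal.isRegular_succ hκ
  have hcof : η.cof = Order.succ κ := hreg.cof_eq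
  have hηlim : Order.IsSuccLimit η := Cardinal.isSuccLimit_ord (hκ.trans (Order.le_succ κ))
  have hpos : (0 : Ordinal) < η := hηlim.pos
  haveI : Nonempty (Set.Iio η) := ⟨⟨0, hpos⟩⟩
  -- the range of the free sequence is a discrete subspace
  have hD : DiscreteTopology (Set.range x : Set X) := by
    rw [discreteTopology_subtype_iff]
    rintro _ ⟨β, rfl⟩
    rw [← nhdsWithin_inter', ← empty_mem_iff_bot, mem_nhdsWithin]
    have hβ1 : (β : Ordinal) + 1 < η := by
      rw [Ordinal.add_one_eq_succ]; exact hηlim.succ_lt β.2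
    set βs : Set.Iio η := ⟨(β : Ordinal) + 1, hβ1⟩ with hβs
    refine ⟨(closure (x '' {α | (α : Ordinal) < (β : Ordinal)}))ᶜ ∩
      (closure (x '' {α | (βs : Ordinal) ≤ (α : Ordinal)}))ᶜ, ?_, ⟨?_, ?_⟩, ?_⟩
    · exact (isClosed_closure.isOpen_compl).inter (isClosed_closure.isOpen_compl)
    · refine Set.disjoint_right.mp (hfree β) (subset_closure ?_)
      exact ⟨β, show (β : Ordinal) ≤ (β : Ordinal) from le_rfl, rfl⟩
    · refine Set.disjoint_left.mp (hfree βs) (subset_closure ?_)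
      refine ⟨β, ?_, rfl⟩
      show (β : Ordinal) < (β : Ordinal) + 1
      rw [Ordinal.add_one_eq_succ]; exact Order.lt_succ _
    · rintro y ⟨⟨h1, h2⟩, hy, γ, rfl⟩
      have hγβ : γ ≠ β := by rintro rfl; exact hy rfl
      rcases lt_trichotomy (γ : Ordinal) (β : Ordinal) with h | h | h
      · exact h1 (subset_closure ⟨γ, h, rfl⟩)
      · exact hγβ (Subtype.ext h)
      · refine h2 (subset_closure ⟨γ, ?_, rfl⟩)
        show (β : Ordinal) + 1 ≤ (γ : Ordinal)
        rw [Ordinal.add_one_eq_succ]; exact Order.succ_le_of_lt h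
  obtain ⟨Y, hDY, hYlin⟩ := hADL _ hD
  -- the tails of the sequence
  set F : Set.Iio η → Set X :=
    fun β => closure (x '' {α | (β : Ordinal) ≤ (α : Ordinal)}) with hF
  have hFmono : ∀ {β γ : Set.Iio η}, β ≤ γ → F γ ⊆ F β := by
    intro β γ h
    exact closure_mono (Set.image_mono  fun α hα => le_trans h hα)
  have hdir : Directed (· ≥ ·) (fun β : Set.Iio η => 𝓟 (F β)) := by
    intro β γ
    rcases le_total β γ with h | h
    · exact ⟨γ, principal_mono.2 (hFmono h), le_rfl⟩
    · exact ⟨β, le_rfl, principal_mono.2 (hFmono h)⟩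
  set f : Filter X := ⨅ β : Set.Iio η, 𝓟 (F β) with hf
  have hmemf : ∀ s : Set X, s ∈ f ↔ ∃ β, F β ⊆ s := by
    intro s
    rw [hf, mem_iInf_of_directed hdir]
    simp only [mem_principal]
  have hFmem : ∀ β, F β ∈ f := fun β => (hmemf _).2 ⟨β, subset_rfl⟩
  -- countable intersection property
  haveI hcif : CountableInterFilter f := by
    constructor
    intro S hSc hS
    choose g hg using fun s : S => (hmemf s).1 (hS s s.2)
    haveI : Countable S := hSc.to_subtype
    have hbound : (⨆ s : S, ((g s : Ordinal) + 1)) < η := by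
      refine Ordinal.iSup_lt_ord ?_ ?_
      · rw [hcof]
        exact lt_of_le_of_lt Cardinal.mk_le_aleph0 (hκ.trans_lt (Order.lt_succ κ))
      · intro s
        rw [Ordinal.add_one_eq_succ]
        exact hηlim.succ_lt (g s).2
    refine (hmemf _).2 ⟨⟨_, hbound⟩, ?_⟩
    intro y hy
    rw [Set.mem_sInter]
    intro s hs
    refine hg ⟨s, hs⟩ (hFmono ?_ hy)
    show (g ⟨s, hs⟩ : Ordinal) ≤ ⨆ s : S, ((g s : Ordinal) + 1)
    have hlt : (g ⟨s, hs⟩ : Ordinal) < (g ⟨s, hs⟩ : Ordinal) + 1 := by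
      rw [Ordinal.add_one_eq_succ]; exact Order.lt_succ _
    exact le_trans hlt.le (Ordinal.le_iSup (fun s : S => ((g s : Ordinal) + 1)) ⟨s, hs⟩)
  -- the filter restricted to Y
  haveI hne : (f ⊓ 𝓟 Y).NeBot := by
    rw [neBot_iff]
    intro hbot
    have hBot2 : (∅ : Set X) ∈ f ⊓ 𝓟 Y := by rw [hbot]; exact mem_bot
    rw [mem_inf_iff] at hBot2
    obtain ⟨t₁, ht₁, t₂, ht₂, he⟩ := hBot2
    obtain ⟨β, hβ⟩ := (hmemf t₁).1 ht₁
    have hx1 : x β ∈ t₁ := by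
      refine hβ (subset_closure ?_)
      exact ⟨β, show (β : Ordinal) ≤ (β : Ordinal) from le_rfl, rfl⟩
    have hx : x β ∈ t₁ ∩ t₂ := ⟨hx1, mem_principal.1 ht₂ (hDY ⟨β, rfl⟩)⟩
    rw [← he] at hx
    exact hx
  obtain ⟨p, hpY, hp⟩ := hYlin (f := f ⊓ 𝓟 Y) inf_le_right
  have hpF : ∀ β, p ∈ F β := by
    intro β
    have := clusterPt_iff_forall_mem_closure.mp hp (F β) (inf_le_left (a := f) (hFmem β))
    rwa [hF, closure_closure] at this
  -- apply tightness at the cluster point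
  obtain ⟨B, hBsub, hBcard, hpB⟩ := htight _ p (hpF ⟨0, hpos⟩)
  have hBr : ∀ b : B, ∃ γ : Set.Iio η, x γ = (b : X) := by
    intro b
    obtain ⟨γ, -, h⟩ := hBsub b.2
    exact ⟨γ, h⟩
  choose g hg using hBr
  have hbound : (⨆ b : B, ((g b : Ordinal) + 1)) < η := by
    refine Ordinal.iSup_lt_ord ?_ ?_
    · rw [hcof]; exact hBcard.trans_lt (Order.lt_succ κ)
    · intro b
      rw [Ordinal.add_one_eq_succ]
      exact hηlim.succ_lt (g b).2
  set βs : Set.Iio η := ⟨_, hbound⟩ with hβs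
  have h1 : p ∈ closure (x '' {α | (α : Ordinal) < (βs : Ordinal)}) := by
    refine closure_mono ?_ hpB
    intro b hb
    refine ⟨g ⟨b, hb⟩, ?_, hg ⟨b, hb⟩⟩
    have hlt : ((g ⟨b, hb⟩ : Set.Iio η) : Ordinal) < ((g ⟨b, hb⟩ : Set.Iio η) : Ordinal) + 1 := by
      rw [Ordinal.add_one_eq_succ]; exact Order.lt_succ _
    exact lt_of_lt_of_le hlt (Ordinal.le_iSup (fun b : B => ((g b : Ordinal) + 1)) ⟨b, hb⟩)
  exact Set.disjoint_left.mp (hfree βs) h1 (hpF βs)
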